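/- With K diagonal positive-definite, r1 < r2 positive odd integers, and M symmetric positive-definite, for all v in R^n: vᵀ K [v]^{r1/r2} ≥ λ_min(K) (2k(v)/λ_max(M))^{(r1+r2)/(2r2)}, where k(v) = (1/2) vᵀ M v and [v]^{r1/r2} is the componentwise signed power. -/

import Mathlib

open Matrix Finset

private lemma real_rpow_add_le_add_rpow {p : ℝ} (a b : ℝ) (ha : 0 ≤ a) (hb : 0 ≤ b)
    (hp : 0 ≤ p) (hp1 : p ≤ 1) : (a + b) ^ p ≤ a ^ p + b ^ p := by
  lift a to NNReal using ha
  lift b to NNReal using hb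
  have h := NNReal.rpow_add_le_add_rpow a b hp hp1
  have := NNReal.coe_le_coe.2 h
  push_cast [NNReal.coe_rpow] at this
  exact_mod_cast this

private lemma rpow_sum_le_sum_rpow' {ι : Type*} (s : Finset ι) (f : ι → ℝ) {p : ℝ}
    (hf : ∀ i ∈ s, 0 ≤ f i) (hp : 0 < p) (hp1 : p ≤ 1) :
    (∑ i ∈ s, f i) ^ p ≤ ∑ i ∈ s, f i ^ p := by
  induction s using Finset.cons_induction with
  | empty => simp [Real.zero_rpow hp.ne']
  | cons a s ha ih =>
    rw [Finset.sum_cons, Finset.sum_cons]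
    have h1 : 0 ≤ f a := hf a (Finset.mem_cons_self a s)
    have h2 : ∀ i ∈ s, 0 ≤ f i := fun i hi => hf i (Finset.mem_cons_of_mem hi)
    calc (f a + ∑ i ∈ s, f i) ^ p
        ≤ f a ^ p + (∑ i ∈ s, f i) ^ p :=
          real_rpow_add_le_add_rpow _ _ h1 (Finset.sum_nonneg h2) hp.le hp1
      _ ≤ f a ^ p + ∑ i ∈ s, f i ^ p := by
          exact add_le_add (le_refl _) (ih h2)

private lemma quad_form_le_sup_eigenvalues (n : ℕ) [NeZero n]
    (M : Matrix (Fin n) (Fin n) ℝ) (hM : M.IsHermitian) (v : Fin n → ℝ) :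
    v ⬝ᵥ M.mulVec v ≤ (⨆ i, hM.eigenvalues i) * (v ⬝ᵥ v) := by
  classical
  set U : Matrix (Fin n) (Fin n) ℝ := (hM.eigenvectorUnitary : Matrix (Fin n) (Fin n) ℝ) with hU
  set w : Fin n → ℝ := Uᵀ *ᵥ v with hw
  have hUstar : star U = Uᵀ := by
    ext i j; simp [Matrix.star_apply]
  have hUU : U * Uᵀ = 1 := by
    rw [← hUstar]
    exact (Matrix.mem_unitaryGroup_iff).mp hM.eigenvectorUnitary.2
  have hvU : v ᵥ* U = w := by
    rw [hw, ← Matrix.transpose_transpose U, Matrix.vecMul_transpose, Matrix.transpose_transpose]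
  have hform : v ⬝ᵥ M.mulVec v = ∑ i, hM.eigenvalues i * w i ^ 2 := by
    conv_lhs => rw [hM.spectral_theorem, Unitary.conjStarAlgAut_apply]
    rw [← hU, hUstar, Matrix.dotProduct_mulVec, ← Matrix.vecMul_vecMul, ← Matrix.vecMul_vecMul,
      hvU, ← Matrix.dotProduct_mulVec, hw]
    simp only [dotProduct, Matrix.vecMul_diagonal, ← hw]
    refine Finset.sum_congr rfl fun i _ => ?_
    simp [Function.comp]
    ring
  have hnorm : w ⬝ᵥ w = v ⬝ᵥ v := by
    rw [hw, Matrix.dotProduct_mulVec, Matrix.vecMul_transpose, Matrix.mulVec_mulVec, hUU,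
      Matrix.one_mulVec]
  have hbdd : BddAbove (Set.range hM.eigenvalues) := Set.Finite.bddAbove (Set.finite_range _)
  calc v ⬝ᵥ M.mulVec v = ∑ i, hM.eigenvalues i * w i ^ 2 := hform
    _ ≤ ∑ i, (⨆ j, hM.eigenvalues j) * w i ^ 2 := by
        refine Finset.sum_le_sum fun i _ => ?_
        exact mul_le_mul_of_nonneg_right (le_ciSup hbdd i) (sq_nonneg _)
    _ = (⨆ j, hM.eigenvalues j) * (w ⬝ᵥ w) := by
        rw [← Finset.mul_sum]; congr 1
        simp [dotProduct, sq]
    _ = (⨆ j, hM.eigenvalues j) * (v ⬝ᵥ v) := by rw [hnorm]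

theorem signed_power_kinetic_lower_bound (n : ℕ) (k : Fin n → ℝ) (hk : ∀ i, 0 < k i)
    (M : Matrix (Fin n) (Fin n) ℝ) (hM : M.IsHermitian) (hMpd : M.PosDef)
    (r1 r2 : ℕ) (h1 : Odd r1) (h2 : Odd r2) (h0 : 0 < r1) (hlt : r1 < r2)
    (v : Fin n → ℝ) :
    v ⬝ᵥ (Matrix.diagonal k).mulVec
        (fun i => Real.sign (v i) * |v i| ^ ((r1 : ℝ) / r2))
      ≥ (⨅ i, k i) *
        (2 * ((1 / 2) * (v ⬝ᵥ M.mulVec v)) / (⨆ i, hM.eigenvalues i))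
          ^ (((r1 : ℝ) + r2) / (2 * r2)) := by
  rcases Nat.eq_zero_or_pos n with hn | hn
  · subst hn
    have h1 : (⨅ i : Fin 0, k i) = 0 := Real.iInf_of_isEmpty _
    simp [dotProduct, h1]
  haveI : NeZero n := ⟨hn.ne'⟩
  haveI : Nonempty (Fin n) := ⟨⟨0, hn⟩⟩
  have hr2 : (0 : ℝ) < r2 := by exact_mod_cast h0.trans hlt
  set t : ℝ := ((r1 : ℝ) + r2) / (2 * r2) with ht
  have hr1 : (0 : ℝ) < r1 := by exact_mod_cast h0
  have htpos : 0 < t := by positivity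
  have ht1 : t ≤ 1 := by
    rw [ht, div_le_one (by positivity)]
    have : (r1 : ℝ) ≤ r2 := by exact_mod_cast hlt.le
    linarith
  have h2t : 2 * t = 1 + (r1 : ℝ) / r2 := by
    rw [ht]; field_simp; ring
  -- LHS computation
  have hLHS : v ⬝ᵥ (Matrix.diagonal k).mulVec
      (fun i => Real.sign (v i) * |v i| ^ ((r1 : ℝ) / r2))
      = ∑ i, k i * |v i| ^ (2 * t) := by
    simp only [dotProduct, Matrix.mulVec_diagonal]
    refine Finset.sum_congr rfl fun i _ => ?_
    have hsgn : v i * Real.sign (v i) = |v i| := by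
      rcases lt_trichotomy (v i) 0 with h | h | h
      · rw [Real.sign_of_neg h, abs_of_neg h]; ring
      · simp [h]
      · rw [Real.sign_of_pos h, abs_of_pos h]; ring
    rw [h2t, Real.rpow_add' (abs_nonneg _) (by positivity), Real.rpow_one]
    calc v i * (k i * (Real.sign (v i) * |v i| ^ ((r1 : ℝ) / r2)))
        = k i * ((v i * Real.sign (v i)) * |v i| ^ ((r1 : ℝ) / r2)) := by ring
      _ = k i * (|v i| * |v i| ^ ((r1 : ℝ) / r2)) := by rw [hsgn]
  -- eigenvalue facts
  have hbdd : BddAbove (Set.range hM.eigenvalues) := Set.Finite.bddAbove (Set.finite_range _)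
  have hlmax : 0 < ⨆ i, hM.eigenvalues i :=
    lt_of_lt_of_le (hMpd.eigenvalues_pos ⟨0, hn⟩) (le_ciSup hbdd _)
  have hq : 0 ≤ v ⬝ᵥ M.mulVec v := by
    have := hMpd.posSemidef.re_dotProduct_nonneg v
    simpa using this
  have hquad : v ⬝ᵥ M.mulVec v ≤ (⨆ i, hM.eigenvalues i) * (v ⬝ᵥ v) :=
    quad_form_le_sup_eigenvalues n M hM v
  have hdiv : 2 * ((1 / 2) * (v ⬝ᵥ M.mulVec v)) / (⨆ i, hM.eigenvalues i) ≤ v ⬝ᵥ v := by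
    rw [div_le_iff₀ hlmax]
    calc 2 * ((1 / 2) * (v ⬝ᵥ M.mulVec v)) = v ⬝ᵥ M.mulVec v := by ring
      _ ≤ (⨆ i, hM.eigenvalues i) * (v ⬝ᵥ v) := hquad
      _ = (v ⬝ᵥ v) * (⨆ i, hM.eigenvalues i) := by ring
  have hdivnn : 0 ≤ 2 * ((1 / 2) * (v ⬝ᵥ M.mulVec v)) / (⨆ i, hM.eigenvalues i) := by
    apply div_nonneg _ hlmax.le; linarith
  have hkmin_le : ∀ i, (⨅ j, k j) ≤ k i := fun i =>
    ciInf_le (Set.Finite.bddBelow (Set.finite_range _)) i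
  have hkmin_nn : 0 ≤ ⨅ j, k j := le_ciInf fun i => (hk i).le
  -- chain
  have step1 : (2 * ((1 / 2) * (v ⬝ᵥ M.mulVec v)) / (⨆ i, hM.eigenvalues i)) ^ t
      ≤ (v ⬝ᵥ v) ^ t := Real.rpow_le_rpow hdivnn hdiv htpos.le
  have step2 : (v ⬝ᵥ v) ^ t ≤ ∑ i, |v i| ^ (2 * t) := by
    have : (v ⬝ᵥ v) = ∑ i, v i ^ 2 := by simp [dotProduct, sq]
    rw [this]
    calc (∑ i, v i ^ 2) ^ t ≤ ∑ i, (v i ^ 2) ^ t :=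
          rpow_sum_le_sum_rpow' _ _ (fun i _ => sq_nonneg _) htpos ht1
      _ = ∑ i, |v i| ^ (2 * t) := by
          refine Finset.sum_congr rfl fun i _ => ?_
          rw [← sq_abs, ← Real.rpow_natCast |(v i)| 2, ← Real.rpow_mul (abs_nonneg _)]
          norm_num
  calc (⨅ i, k i) * (2 * ((1 / 2) * (v ⬝ᵥ M.mulVec v)) / (⨆ i, hM.eigenvalues i)) ^ t
      ≤ (⨅ i, k i) * ∑ i, |v i| ^ (2 * t) :=
        mul_le_mul_of_nonneg_left (step1.trans step2) hkmin_nn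
    _ = ∑ i, (⨅ j, k j) * |v i| ^ (2 * t) := Finset.mul_sum _ _ _
    _ ≤ ∑ i, k i * |v i| ^ (2 * t) :=
        Finset.sum_le_sum fun i _ =>
          mul_le_mul_of_nonneg_right (hkmin_le i) (Real.rpow_nonneg (abs_nonneg _) _)
    _ = _ := hLHS.symm
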